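/- For every n ∈ ℕ and every real number s, ∫₀^∞ h_{2n}(v) v^{1/2 - i s} (dv/v) = (-1)^n 𝒫_n(s) · ∫₀^∞ h₀(v) v^{1/2 - i s} (dv/v), where h₀(x) = 2^{1/4} e^{-π x²}. -/

import Mathlib

open MeasureTheory Complex Finset

/-- The normalized even Hermite function `h_{2n}`. -/
noncomputable def h2 (n : ℕ) (x : ℝ) : ℝ :=
  ∑ k ∈ Finset.range (n + 1),
    (-1 : ℝ) ^ (n - k) * (2 : ℝ) ^ ((3 * (k : ℝ)) - n + 1 / 4) *
      Real.sqrt ((2 * n).factorial) / ((2 * k).factorial * (n - k).factorial) *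
      Real.pi ^ k * x ^ (2 * k) * Real.exp (-Real.pi * x ^ 2)

/-- `h₀(x) = 2^{1/4} e^{-π x²}`. -/
noncomputable def h0 (x : ℝ) : ℝ := (2 : ℝ) ^ ((1 : ℝ) / 4) * Real.exp (-Real.pi * x ^ 2)

/-- The polynomials `𝒫_m` as functions on `ℂ`. -/
noncomputable def Pc (m : ℕ) (x : ℂ) : ℂ :=
  (Real.sqrt ((2 * m).factorial) : ℂ) *
    ∑ k ∈ Finset.range (m + 1),
      (-1 : ℂ) ^ k * (2 : ℂ) ^ (3 * (k : ℤ) - (m : ℤ)) *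
        (∏ j ∈ Finset.range k, ((j : ℂ) - Complex.I * x / 2 + 1 / 4)) /
        (((2 * k).factorial : ℂ) * ((m - k).factorial : ℂ))

lemma mellin_exp {s : ℂ} (hs : 0 < s.re) :
    mellin (fun t : ℝ => (Real.exp (-Real.pi * t) : ℂ)) s
      = (Real.pi : ℂ) ^ (-s) * Complex.Gamma s := by
  have h : HasSum (fun _ : Unit => (Real.pi : ℂ) ^ (-s) * Complex.Gamma s * 1 / ((1:ℝ) : ℂ) ^ s)
      (mellin (fun t : ℝ => (Real.exp (-Real.pi * t) : ℂ)) s) := by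
    refine hasSum_mellin_pi_mul (fun _ => Or.inr one_pos) hs (fun t _ => ?_)
      Summable.of_finite
    simpa using hasSum_fintype (fun _ : Unit => (1 : ℂ) * (Real.exp (-Real.pi * 1 * t) : ℂ))
  have h2 := hasSum_fintype
    (fun _ : Unit => (Real.pi : ℂ) ^ (-s) * Complex.Gamma s * 1 / ((1:ℝ) : ℂ) ^ s)
  have h3 := h.unique h2
  simpa using h3

lemma mellin_gauss {s : ℂ} (hs : 0 < s.re) :
    mellin (fun t : ℝ => (Real.exp (-Real.pi * t ^ 2) : ℂ)) s = Complex.Gammaℝ s / 2 := by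
  have h1 : mellin (fun t : ℝ => (Real.exp (-Real.pi * t ^ 2) : ℂ)) s
      = mellin (fun t : ℝ => (fun u : ℝ => (Real.exp (-Real.pi * u) : ℂ)) (t ^ (2:ℝ))) s := by
    refine setIntegral_congr_fun measurableSet_Ioi fun t ht => ?_
    simp [Real.rpow_two]
  have h2 : (0:ℝ) < (s / ((2:ℝ):ℂ)).re := by
    rw [show ((2:ℝ):ℂ) = 2 by norm_num, div_ofNat_re]; linarith
  rw [h1, mellin_comp_rpow (fun u : ℝ => (Real.exp (-Real.pi * u) : ℂ)) s 2, mellin_exp h2]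
  rw [Complex.Gammaℝ_def]
  norm_num [smul_eq_mul]
  rw [neg_div]
  ring

lemma gauss_mellin {w : ℂ} (hw : 0 < w.re) :
    ∫ v in Set.Ioi (0:ℝ), (v : ℂ) ^ (w - 1) * Real.exp (-Real.pi * v ^ 2)
      = Complex.Gammaℝ w / 2 := by
  rw [← mellin_gauss hw]
  simp [mellin, smul_eq_mul]

lemma gauss_integrable {w : ℂ} (hw : -1 < w.re) :
    IntegrableOn (fun v : ℝ => (v : ℂ) ^ w * Real.exp (-Real.pi * v ^ 2)) (Set.Ioi 0) := by
  refine Integrable.mono' (g := fun v : ℝ => v ^ w.re * Real.exp (-Real.pi * v ^ 2))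
    (integrableOn_rpow_mul_exp_neg_mul_sq Real.pi_pos hw) ?_ ?_
  · refine (ContinuousOn.mul ?_ ?_).aestronglyMeasurable measurableSet_Ioi
    · exact fun t ht =>
        (continuousAt_ofReal_cpow_const _ _ (Or.inr (ne_of_gt ht))).continuousWithinAt
    · exact Continuous.continuousOn (by continuity)
  · filter_upwards [ae_restrict_mem measurableSet_Ioi] with v hv
    rw [norm_mul, Complex.norm_real, Real.norm_eq_abs,
      Complex.norm_cpow_eq_rpow_re_of_pos hv, Real.abs_exp]

lemma Gammaℝ_shift {c : ℂ} (hc : 0 < c.re) (k : ℕ) :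
    Complex.Gammaℝ (c + 2 * k) = Complex.Gammaℝ c *
      ∏ j ∈ Finset.range k, ((c / 2 + j) / (Real.pi : ℂ)) := by
  induction k with
  | zero => simp
  | succ k ih =>
    have hre : 0 < (c + 2 * (k : ℂ)).re := by
      have : (c + 2 * (k : ℂ)).re = c.re + 2 * k := by simp
      rw [this]; positivity
    have hne : c + 2 * (k : ℂ) ≠ 0 := fun h => by simp [h] at hre
    have hstep : c + 2 * ((k + 1 : ℕ) : ℂ) = (c + 2 * k) + 2 := by push_cast; ring
    rw [hstep, Complex.Gammaℝ_add_two hne, ih, Finset.prod_range_succ]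
    have hpi : (Real.pi : ℂ) ≠ 0 := Complex.ofReal_ne_zero.2 Real.pi_ne_zero
    set P := ∏ j ∈ Finset.range k, ((c / 2 + (j:ℂ)) / (Real.pi : ℂ)) with hP
    field_simp

/-- `∫₀^∞ h_{2n}(v) v^{1/2-is} dv/v = (-1)^n 𝒫_n(s) ∫₀^∞ h₀(v) v^{1/2-is} dv/v`. -/
theorem stmt1 (n : ℕ) (s : ℝ) :
    (∫ v in Set.Ioi (0 : ℝ),
        ((h2 n v : ℝ) : ℂ) * (v : ℂ) ^ ((1 : ℂ) / 2 - Complex.I * (s : ℂ)) / (v : ℂ))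
      = (-1 : ℂ) ^ n * Pc n (s : ℂ) *
          ∫ v in Set.Ioi (0 : ℝ),
            ((h0 v : ℝ) : ℂ) * (v : ℂ) ^ ((1 : ℂ) / 2 - Complex.I * (s : ℂ)) / (v : ℂ) := by
  set c : ℂ := (1 : ℂ) / 2 - Complex.I * (s : ℂ) with hc
  have hcre : c.re = 1 / 2 := by simp [hc]
  have hcpos : 0 < c.re := by rw [hcre]; norm_num
  have hpi : (Real.pi : ℂ) ≠ 0 := Complex.ofReal_ne_zero.2 Real.pi_ne_zero
  -- right-hand side integral
  have hR : (∫ v in Set.Ioi (0:ℝ), ((h0 v : ℝ) : ℂ) * (v : ℂ) ^ c / (v : ℂ))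
      = (((2:ℝ) ^ ((1:ℝ)/4) : ℝ) : ℂ) * (Complex.Gammaℝ c / 2) := by
    rw [← gauss_mellin hcpos, ← integral_const_mul]
    refine setIntegral_congr_fun measurableSet_Ioi fun v hv => ?_
    have hv0 : (v : ℂ) ≠ 0 := Complex.ofReal_ne_zero.2 (ne_of_gt hv)
    unfold h0
    rw [Complex.ofReal_mul, Complex.cpow_sub c 1 hv0, Complex.cpow_one]
    ring
  -- left-hand side integral
  have key : ∀ k : ℕ, 0 < (c + 2 * (k:ℂ)).re := by
    intro k
    have : (c + 2 * (k : ℂ)).re = c.re + 2 * k := by simp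
    rw [this]; positivity
  have hL : (∫ v in Set.Ioi (0:ℝ), ((h2 n v : ℝ) : ℂ) * (v : ℂ) ^ c / (v : ℂ))
      = ∑ k ∈ Finset.range (n + 1),
          ((((-1 : ℝ) ^ (n - k) * (2 : ℝ) ^ ((3 * (k : ℝ)) - n + 1 / 4) *
            Real.sqrt ((2 * n).factorial) / ((2 * k).factorial * (n - k).factorial) *
            Real.pi ^ k : ℝ)) : ℂ) * (Complex.Gammaℝ (c + 2 * (k:ℂ)) / 2) := by
    have h1 : ∀ v ∈ Set.Ioi (0:ℝ), ((h2 n v : ℝ) : ℂ) * (v : ℂ) ^ c / (v : ℂ)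
        = ∑ k ∈ Finset.range (n + 1),
            ((((-1 : ℝ) ^ (n - k) * (2 : ℝ) ^ ((3 * (k : ℝ)) - n + 1 / 4) *
              Real.sqrt ((2 * n).factorial) / ((2 * k).factorial * (n - k).factorial) *
              Real.pi ^ k : ℝ)) : ℂ) *
              ((v : ℂ) ^ (c + 2 * (k:ℂ) - 1) * Real.exp (-Real.pi * v ^ 2)) := by
      intro v hv
      have hv0 : (v : ℂ) ≠ 0 := Complex.ofReal_ne_zero.2 (ne_of_gt hv)
      unfold h2
      push_cast
      rw [Finset.sum_mul, Finset.sum_div]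
      refine Finset.sum_congr rfl fun k hk => ?_
      have hpow : (v : ℂ) ^ (c + 2 * (k:ℂ) - 1)
          = (v : ℂ) ^ c * (v : ℂ) ^ (2 * k : ℕ) / (v : ℂ) := by
        rw [show c + 2 * (k:ℂ) - 1 = c + ((2 * k : ℕ) : ℂ) - 1 by push_cast; ring,
          Complex.cpow_sub (c + ((2 * k : ℕ) : ℂ)) 1 hv0, Complex.cpow_add _ _ hv0,
          Complex.cpow_natCast, Complex.cpow_one]
      rw [hpow]
      ring
    rw [setIntegral_congr_fun measurableSet_Ioi h1,
      integral_finset_sum _ (fun k _ => ?_)]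
    · refine Finset.sum_congr rfl fun k hk => ?_
      rw [integral_const_mul, gauss_mellin (key k)]
    · refine Integrable.const_mul ?_ _
      refine gauss_integrable ?_
      have : (c + 2 * (k:ℂ) - 1).re = c.re + 2 * k - 1 := by simp
      rw [this, hcre]
      have : (0:ℝ) ≤ 2 * k := by positivity
      linarith
  rw [hL, hR]
  unfold Pc
  rw [Finset.mul_sum, Finset.mul_sum, Finset.sum_mul]
  refine Finset.sum_congr rfl fun k hk => ?_
  have hk' : k ≤ n := Nat.lt_succ_iff.mp (Finset.mem_range.mp hk)
  rw [Gammaℝ_shift hcpos k]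
  -- rewrite the product
  have hprod : (∏ j ∈ Finset.range k, ((c / 2 + (j:ℂ)) / (Real.pi : ℂ)))
      = (∏ j ∈ Finset.range k, ((j : ℂ) - Complex.I * (s:ℂ) / 2 + 1 / 4)) / (Real.pi:ℂ) ^ k := by
    rw [Finset.prod_div_distrib, Finset.prod_const, Finset.card_range]
    congr 1
    refine Finset.prod_congr rfl fun j _ => ?_
    rw [hc]; ring
  rw [hprod]
  have hneg : ((-1 : ℂ)) ^ (n - k) = (-1 : ℂ) ^ n * (-1 : ℂ) ^ k := by
    calc ((-1 : ℂ)) ^ (n - k) = (-1 : ℂ) ^ (n - k) * ((-1 : ℂ) ^ (2 * k)) := by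
          rw [pow_mul]; norm_num
    _ = (-1 : ℂ) ^ ((n - k) + k) * (-1 : ℂ) ^ k := by rw [two_mul, pow_add, pow_add]; ring
    _ = (-1 : ℂ) ^ n * (-1 : ℂ) ^ k := by rw [Nat.sub_add_cancel hk']
  have h2pow : (((2 : ℝ) ^ ((3 * (k : ℝ)) - n + 1 / 4) : ℝ) : ℂ)
      = (2 : ℂ) ^ (3 * (k : ℤ) - (n : ℤ)) * (((2:ℝ) ^ ((1:ℝ)/4) : ℝ) : ℂ) := by
    rw [show (3 * (k : ℝ)) - n + 1 / 4 = ((3 * (k : ℤ) - (n : ℤ) : ℤ) : ℝ) + 1/4 by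
        push_cast; ring,
      Real.rpow_add two_pos, Real.rpow_intCast, Complex.ofReal_mul, Complex.ofReal_zpow]
    push_cast
    ring
  push_cast
  rw [h2pow, hneg]
  set G := Complex.Gammaℝ c
  set Q := (((2:ℝ) ^ ((1:ℝ)/4) : ℝ) : ℂ)
  set R := ((Real.sqrt ((2 * n).factorial) : ℝ) : ℂ)
  set P := ∏ j ∈ Finset.range k, ((j : ℂ) - Complex.I * (s:ℂ) / 2 + 1 / 4)
  set Z := (2 : ℂ) ^ (3 * (k : ℤ) - (n : ℤ))
  have hf1 : (((2 * k).factorial : ℕ) : ℂ) ≠ 0 := Nat.cast_ne_zero.mpr (Nat.factorial_ne_zero _)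
  have hf1' : (((k * 2).factorial : ℕ) : ℂ) ≠ 0 := Nat.cast_ne_zero.mpr (Nat.factorial_ne_zero _)
  have hf2 : (((n - k).factorial : ℕ) : ℂ) ≠ 0 := Nat.cast_ne_zero.mpr (Nat.factorial_ne_zero _)
  have hpik : (Real.pi : ℂ) ^ k ≠ 0 := pow_ne_zero _ hpi
  field_simp [hf1, hf1', hf2, hpik]
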